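/- Let m ≥ 1 be an integer, and let ζ_j ∈ ℂ (for 1 ≤ j ≤ m) and ν_{i,j} ∈ ℂ (for 1 ≤ i < j ≤ m) be given. Define the complex matrix T indexed by Fin m × Fin m by T = Σ_{i<j} ζ_j (E_{ii} ⊗ₖ E_{jj}) + ν_{i,j} (E_{ji} ⊗ₖ E_{ij}), where E_{ij} are the matrix units of m×m matrices and ⊗ₖ is the Kronecker product. Then T satisfies condition (F): T₁₂·T₂₃·(T₁₂+T₂₃) = (T₁₂+T₂₃)·T₁₂·T₂₃, where T₁₂ = T ⊗ₖ 1ₘ and T₂₃ = 1ₘ ⊗ₖ T. -/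

import Mathlib

open Matrix Kronecker

/-- `S ⊗ₖ 1ₘ`, reindexed to act on `ℂ^m ⊗ ℂ^m ⊗ ℂ^m`. -/
noncomputable def kron12 {m : ℕ} (S : Matrix (Fin m × Fin m) (Fin m × Fin m) ℂ) :
    Matrix (Fin m × Fin m × Fin m) (Fin m × Fin m × Fin m) ℂ :=
  Matrix.reindex (Equiv.prodAssoc (Fin m) (Fin m) (Fin m))
    (Equiv.prodAssoc (Fin m) (Fin m) (Fin m)) (S ⊗ₖ (1 : Matrix (Fin m) (Fin m) ℂ))

/-- `1ₘ ⊗ₖ S`, acting on `ℂ^m ⊗ ℂ^m ⊗ ℂ^m`. -/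
noncomputable def kron23 {m : ℕ} (S : Matrix (Fin m × Fin m) (Fin m × Fin m) ℂ) :
    Matrix (Fin m × Fin m × Fin m) (Fin m × Fin m × Fin m) ℂ :=
  (1 : Matrix (Fin m) (Fin m) ℂ) ⊗ₖ S

/-- The matrix `Σ_{i<j} ρ_i E_ii ⊗ E_jj + μ_{i,j} E_ji ⊗ E_ij` of
Proposition 4 (representation of the braid-like algebra `S_n`). -/
noncomputable def repS (m : ℕ) (ρ : Fin m → ℂ) (μ : Fin m → Fin m → ℂ) :
    Matrix (Fin m × Fin m) (Fin m × Fin m) ℂ :=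
  ∑ i : Fin m, ∑ j : Fin m,
    if i < j then
      ρ i • (Matrix.single i i (1 : ℂ) ⊗ₖ Matrix.single j j (1 : ℂ)) +
      μ i j • (Matrix.single j i (1 : ℂ) ⊗ₖ Matrix.single i j (1 : ℂ))
    else 0

/-- The matrix `Σ_{i<j} ζ_j E_ii ⊗ E_jj + ν_{i,j} E_ji ⊗ E_ij` of
Proposition 5 (representation of the braid-like algebra `T_n`). -/
noncomputable def repT (m : ℕ) (ζ : Fin m → ℂ) (ν : Fin m → Fin m → ℂ) :
    Matrix (Fin m × Fin m) (Fin m × Fin m) ℂ :=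
  ∑ i : Fin m, ∑ j : Fin m,
    if i < j then
      ζ j • (Matrix.single i i (1 : ℂ) ⊗ₖ Matrix.single j j (1 : ℂ)) +
      ν i j • (Matrix.single j i (1 : ℂ) ⊗ₖ Matrix.single i j (1 : ℂ))
    else 0

noncomputable def tt {m : ℕ} (ζ : Fin m → ℂ) (ν : Fin m → Fin m → ℂ) (a b c d : Fin m) : ℂ :=
  (if a = c ∧ b = d ∧ c < d then ζ d else 0) + (if a = d ∧ b = c ∧ c < d then ν c d else 0)

section Aux
variable {m : ℕ} (ζ : Fin m → ℂ) (ν : Fin m → Fin m → ℂ)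

lemma repT_apply (a b c d : Fin m) :
    repT m ζ ν (a,b) (c,d) = tt ζ ν a b c d := by
  unfold repT tt
  rw [Matrix.sum_apply]
  rw [Finset.sum_eq_single c]
  · rw [Matrix.sum_apply]
    rw [Finset.sum_eq_single d]
    · by_cases h : c < d
      · simp [h, Matrix.single, Matrix.add_apply, and_comm, eq_comm]
        split_ifs <;> simp_all
      · simp [h]
    · intro j _ hj
      by_cases h : c < j <;> simp [h, Matrix.single, hj, Ne.symm hj]
    · simp
  · intro i _ hi
    rw [Matrix.sum_apply]
    apply Finset.sum_eq_zero
    intro j _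
    by_cases h : i < j <;> simp [h, Matrix.single, hi, Ne.symm hi]
  · simp

lemma kron12_apply (S : Matrix (Fin m × Fin m) (Fin m × Fin m) ℂ) (a b c d e f : Fin m) :
    kron12 S (a,b,c) (d,e,f) = S (a,b) (d,e) * (if c = f then 1 else 0) := by
  simp [kron12, Matrix.one_apply]

lemma kron23_apply (S : Matrix (Fin m × Fin m) (Fin m × Fin m) ℂ) (a b c d e f : Fin m) :
    kron23 S (a,b,c) (d,e,f) = (if a = d then 1 else 0) * S (b,c) (e,f) := by
  simp [kron23, Matrix.one_apply]

lemma mul12_apply (S : Matrix (Fin m × Fin m) (Fin m × Fin m) ℂ)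
    (M : Matrix (Fin m × Fin m × Fin m) (Fin m × Fin m × Fin m) ℂ)
    (a b c : Fin m) (y : Fin m × Fin m × Fin m) :
    (kron12 S * M) (a,b,c) y = ∑ p : Fin m, ∑ q : Fin m, S (a,b) (p,q) * M (p,q,c) y := by
  rw [Matrix.mul_apply, Fintype.sum_prod_type]
  refine Finset.sum_congr rfl fun p _ => ?_
  rw [Fintype.sum_prod_type]
  refine Finset.sum_congr rfl fun q _ => ?_
  rw [Finset.sum_eq_single c]
  · simp [kron12_apply]
  · intro r _ hr; simp [kron12_apply, Ne.symm hr]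
  · simp

lemma mul23_apply (S : Matrix (Fin m × Fin m) (Fin m × Fin m) ℂ)
    (M : Matrix (Fin m × Fin m × Fin m) (Fin m × Fin m × Fin m) ℂ)
    (a b c : Fin m) (y : Fin m × Fin m × Fin m) :
    (kron23 S * M) (a,b,c) y = ∑ q : Fin m, ∑ r : Fin m, S (b,c) (q,r) * M (a,q,r) y := by
  rw [Matrix.mul_apply, Fintype.sum_prod_type]
  rw [Finset.sum_eq_single a]
  · rw [Fintype.sum_prod_type]
    refine Finset.sum_congr rfl fun q _ => ?_
    refine Finset.sum_congr rfl fun r _ => ?_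
    simp [kron23_apply]
  · intro p _ hp
    rw [Fintype.sum_prod_type]
    apply Finset.sum_eq_zero; intro q _
    apply Finset.sum_eq_zero; intro r _
    simp [kron23_apply, Ne.symm hp]
  · simp

lemma AB_apply (S : Matrix (Fin m × Fin m) (Fin m × Fin m) ℂ) (a b c d e f : Fin m) :
    (kron12 S * kron23 S) (a,b,c) (d,e,f)
      = ∑ q : Fin m, S (a,b) (d,q) * S (q,c) (e,f) := by
  rw [mul12_apply]
  rw [Finset.sum_eq_single d]
  · refine Finset.sum_congr rfl fun q _ => ?_
    simp [kron23_apply]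
  · intro p _ hp
    apply Finset.sum_eq_zero; intro q _
    simp [kron23_apply, hp]
  · simp

lemma BA_apply (S : Matrix (Fin m × Fin m) (Fin m × Fin m) ℂ) (a b c d e f : Fin m) :
    (kron23 S * kron12 S) (a,b,c) (d,e,f)
      = ∑ q : Fin m, S (b,c) (q,f) * S (a,q) (d,e) := by
  rw [mul23_apply]
  refine Finset.sum_congr rfl fun q _ => ?_
  rw [Finset.sum_eq_single f]
  · simp [kron12_apply]
  · intro r _ hr
    simp [kron12_apply, hr]
  · simp

lemma BB_apply (S : Matrix (Fin m × Fin m) (Fin m × Fin m) ℂ) (a b c d e f : Fin m) :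
    (kron23 S * kron23 S) (a,b,c) (d,e,f)
      = (if a = d then 1 else 0) * ∑ q : Fin m, ∑ r : Fin m, S (b,c) (q,r) * S (q,r) (e,f) := by
  rw [mul23_apply]
  rw [Finset.mul_sum]
  refine Finset.sum_congr rfl fun q _ => ?_
  rw [Finset.mul_sum]
  refine Finset.sum_congr rfl fun r _ => ?_
  simp [kron23_apply]

lemma collapse_pair (a b : Fin m) (F : Fin m → Fin m → ℂ) :
    (∑ p : Fin m, ∑ x : Fin m, tt ζ ν a b p x * F p x)
      = (if a < b then ζ b * F a b else 0) + (if b < a then ν b a * F b a else 0) := by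
  unfold tt
  simp only [add_mul, Finset.sum_add_distrib]
  congr 1
  · rw [Finset.sum_eq_single a]
    · rw [Finset.sum_eq_single b]
      · split_ifs <;> simp_all
      · intro x _ hx; simp [Ne.symm hx]
      · simp
    · intro p _ hp
      apply Finset.sum_eq_zero; intro x _
      simp [Ne.symm hp]
    · simp
  · rw [Finset.sum_eq_single b]
    · rw [Finset.sum_eq_single a]
      · split_ifs <;> simp_all
      · intro x _ hx; simp [Ne.symm hx]
      · simp
    · intro p _ hp
      apply Finset.sum_eq_zero; intro x _
      simp [Ne.symm hp]
    · simp

lemma collapse_q (b c f : Fin m) (g : Fin m → ℂ) :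
    (∑ q : Fin m, tt ζ ν b c q f * g q)
      = (if c = f ∧ b < c then ζ c * g b else 0) + (if b = f ∧ c < b then ν c b * g c else 0) := by
  unfold tt
  simp only [add_mul, Finset.sum_add_distrib]
  congr 1
  · rw [Finset.sum_eq_single b]
    · split_ifs <;> simp_all <;> omega
    · intro q _ hq; simp [Ne.symm hq]
    · simp
  · rw [Finset.sum_eq_single c]
    · split_ifs <;> simp_all <;> omega
    · intro q _ hq; simp [Ne.symm hq]
    · simp

lemma collapse_q' (a b d : Fin m) (g : Fin m → ℂ) :
    (∑ q : Fin m, tt ζ ν a b d q * g q)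
      = (if d = a ∧ a < b then ζ b * g b else 0) + (if d = b ∧ b < a then ν b a * g a else 0) := by
  unfold tt
  simp only [add_mul, Finset.sum_add_distrib]
  congr 1
  · rw [Finset.sum_eq_single b]
    · split_ifs <;> simp_all <;> omega
    · intro q _ hq; simp [Ne.symm hq]
    · simp
  · rw [Finset.sum_eq_single a]
    · split_ifs <;> simp_all <;> omega
    · intro q _ hq; simp [Ne.symm hq]
    · simp

lemma tt_norm (x y u v : Fin m) :
    tt ζ ν x y u v = (if u = x ∧ v = y ∧ x < y then ζ y else 0) +
      (if u = y ∧ v = x ∧ y < x then ν y x else 0) := by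
  unfold tt
  congr 1 <;> split_ifs <;> simp_all

lemma L1_eq (a b c d e f : Fin m) :
    (kron12 (repT m ζ ν) * kron23 (repT m ζ ν) * kron12 (repT m ζ ν)) (a,b,c) (d,e,f)
      = (if a < b then ζ b *
            ((if c = f ∧ b < c then ζ c * tt ζ ν a b d e else 0) +
             (if b = f ∧ c < b then ν c b * tt ζ ν a c d e else 0)) else 0) +
        (if b < a then ν b a *
            ((if c = f ∧ a < c then ζ c * tt ζ ν b a d e else 0) +
             (if a = f ∧ c < a then ν c a * tt ζ ν b c d e else 0)) else 0) := by
  rw [mul_assoc, mul12_apply]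
  simp only [BA_apply, repT_apply]
  rw [show (∑ p : Fin m, ∑ q : Fin m, tt ζ ν a b p q *
        ∑ x : Fin m, tt ζ ν q c x f * tt ζ ν p x d e)
      = (if a < b then ζ b * (∑ x : Fin m, tt ζ ν b c x f * tt ζ ν a x d e) else 0) +
        (if b < a then ν b a * (∑ x : Fin m, tt ζ ν a c x f * tt ζ ν b x d e) else 0) from
    collapse_pair ζ ν a b (fun p q => ∑ x : Fin m, tt ζ ν q c x f * tt ζ ν p x d e)]
  rw [collapse_q ζ ν b c f (fun x => tt ζ ν a x d e),
      collapse_q ζ ν a c f (fun x => tt ζ ν b x d e)]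

lemma L2_eq (a b c d e f : Fin m) :
    (kron12 (repT m ζ ν) * kron23 (repT m ζ ν) * kron23 (repT m ζ ν)) (a,b,c) (d,e,f)
      = (if a < b then ζ b * ((if a = d then 1 else 0) *
            ((if b < c then ζ c * tt ζ ν b c e f else 0) +
             (if c < b then ν c b * tt ζ ν c b e f else 0))) else 0) +
        (if b < a then ν b a * ((if b = d then 1 else 0) *
            ((if a < c then ζ c * tt ζ ν a c e f else 0) +
             (if c < a then ν c a * tt ζ ν c a e f else 0))) else 0) := by
  rw [mul_assoc, mul12_apply]
  simp only [BB_apply, repT_apply]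
  rw [show (∑ p : Fin m, ∑ q : Fin m, tt ζ ν a b p q *
        ((if p = d then 1 else 0) * ∑ u : Fin m, ∑ r : Fin m, tt ζ ν q c u r * tt ζ ν u r e f))
      = (if a < b then ζ b * ((if a = d then 1 else 0) *
            ∑ u : Fin m, ∑ r : Fin m, tt ζ ν b c u r * tt ζ ν u r e f) else 0) +
        (if b < a then ν b a * ((if b = d then 1 else 0) *
            ∑ u : Fin m, ∑ r : Fin m, tt ζ ν a c u r * tt ζ ν u r e f) else 0) from
    collapse_pair ζ ν a b (fun p q => (if p = d then 1 else 0) *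
      ∑ u : Fin m, ∑ r : Fin m, tt ζ ν q c u r * tt ζ ν u r e f)]
  rw [collapse_pair ζ ν b c (fun u r => tt ζ ν u r e f),
      collapse_pair ζ ν a c (fun u r => tt ζ ν u r e f)]

lemma R1_eq (a b c d e f : Fin m) :
    (kron12 (repT m ζ ν) * kron12 (repT m ζ ν) * kron23 (repT m ζ ν)) (a,b,c) (d,e,f)
      = (if a < b then ζ b *
            ((if d = a ∧ a < b then ζ b * tt ζ ν b c e f else 0) +
             (if d = b ∧ b < a then ν b a * tt ζ ν a c e f else 0)) else 0) +
        (if b < a then ν b a *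
            ((if d = b ∧ b < a then ζ a * tt ζ ν a c e f else 0) +
             (if d = a ∧ a < b then ν a b * tt ζ ν b c e f else 0)) else 0) := by
  rw [mul_assoc, mul12_apply]
  simp only [AB_apply, repT_apply]
  rw [show (∑ p : Fin m, ∑ q : Fin m, tt ζ ν a b p q *
        ∑ x : Fin m, tt ζ ν p q d x * tt ζ ν x c e f)
      = (if a < b then ζ b * (∑ x : Fin m, tt ζ ν a b d x * tt ζ ν x c e f) else 0) +
        (if b < a then ν b a * (∑ x : Fin m, tt ζ ν b a d x * tt ζ ν x c e f) else 0) from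
    collapse_pair ζ ν a b (fun p q => ∑ x : Fin m, tt ζ ν p q d x * tt ζ ν x c e f)]
  rw [collapse_q' ζ ν a b d (fun x => tt ζ ν x c e f),
      collapse_q' ζ ν b a d (fun x => tt ζ ν x c e f)]

lemma R2_eq (a b c d e f : Fin m) :
    (kron23 (repT m ζ ν) * kron12 (repT m ζ ν) * kron23 (repT m ζ ν)) (a,b,c) (d,e,f)
      = (if b < c then ζ c *
            ((if d = a ∧ a < b then ζ b * tt ζ ν b c e f else 0) +
             (if d = b ∧ b < a then ν b a * tt ζ ν a c e f else 0)) else 0) +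
        (if c < b then ν c b *
            ((if d = a ∧ a < c then ζ c * tt ζ ν c b e f else 0) +
             (if d = c ∧ c < a then ν c a * tt ζ ν a b e f else 0)) else 0) := by
  rw [mul_assoc, mul23_apply]
  simp only [AB_apply, repT_apply]
  rw [show (∑ q : Fin m, ∑ r : Fin m, tt ζ ν b c q r *
        ∑ x : Fin m, tt ζ ν a q d x * tt ζ ν x r e f)
      = (if b < c then ζ c * (∑ x : Fin m, tt ζ ν a b d x * tt ζ ν x c e f) else 0) +
        (if c < b then ν c b * (∑ x : Fin m, tt ζ ν a c d x * tt ζ ν x b e f) else 0) from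
    collapse_pair ζ ν b c (fun q r => ∑ x : Fin m, tt ζ ν a q d x * tt ζ ν x r e f)]
  rw [collapse_q' ζ ν a b d (fun x => tt ζ ν x c e f),
      collapse_q' ζ ν a c d (fun x => tt ζ ν x b e f)]

end Aux

/-- Proposition 5: the matrix `T = Σ_{i<j} ζ_j E_ii ⊗ E_jj + ν_{i,j} E_ji ⊗ E_ij`
satisfies condition (F), i.e. yields a representation of the braid-like
algebra `T_n`. -/
theorem repT_satisfies_condF (m : ℕ) (hm : 1 ≤ m)
    (ζ : Fin m → ℂ) (ν : Fin m → Fin m → ℂ) :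
    kron12 (repT m ζ ν) * kron23 (repT m ζ ν) * (kron12 (repT m ζ ν) + kron23 (repT m ζ ν)) =
      (kron12 (repT m ζ ν) + kron23 (repT m ζ ν)) * kron12 (repT m ζ ν) * kron23 (repT m ζ ν) := by
  rw [mul_add, add_mul, add_mul]
  ext ⟨a, b, c⟩ ⟨d, e, f⟩
  rw [Matrix.add_apply, Matrix.add_apply]
  rw [L1_eq, L2_eq, R1_eq, R2_eq]
  simp only [tt_norm]
  by_cases hab : a < b <;> by_cases hba : b < a <;> by_cases hbc : b < c <;>
    by_cases hcb : c < b <;> by_cases hac : a < c <;> by_cases hca : c < a <;>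
    first
      | (exfalso; omega)
      | (simp only [hab, hba, hbc, hcb, hac, hca, ite_self, if_true, if_false, true_and,
          and_true, false_and, and_false, mul_zero, zero_mul, add_zero, zero_add, mul_one,
          one_mul]
         first
           | done
           | ring1
           | (split_ifs <;> first | ring1 | omega))
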